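/- Let I ⊆ T be an interval. The interval module C(I) is lower semi-continuous if and only if I = overline(I), and C(I) is upper semi-continuous if and only if I = underline(I). -/

import Mathlib

open CategoryTheory CategoryTheory.Limits

set_option maxHeartbeats 1000000
set_option synthInstance.maxHeartbeats 200000

/-- A persistence module over a totally ordered set `T`: a functor from `T` (viewed as a
category via its order) to the category of `F`-vector spaces. -/
abbrev PersistenceModule (F : Type) [Field F] (T : Type) [LinearOrder T] :=
  T ⥤ ModuleCat.{0} F

variable (F : Type) [Field F] (T : Type) [LinearOrder T]

/-- The inclusion functor of the strict up-set of `t` into `T`. -/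
def upFunctor (t : T) : {s : T // t < s} ⥤ T :=
  Monotone.functor (f := (Subtype.val : {s : T // t < s} → T)) (fun _ _ h => h)

/-- The inclusion functor of the strict down-set of `t` into `T`. -/
def downFunctor (t : T) : {s : T // s < t} ⥤ T :=
  Monotone.functor (f := (Subtype.val : {s : T // s < t} → T)) (fun _ _ h => h)

/-- `underline M`, with `(underline M)_t = lim_{s > t} M_s` (the limit over the empty
category being `0`). -/
noncomputable def underlinePM (M : PersistenceModule F T) : PersistenceModule F T where
  obj t := limit (upFunctor T t ⋙ M)
  map {s t} f := limit.lift (upFunctor T t ⋙ M)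
    { pt := limit (upFunctor T s ⋙ M)
      π :=
        { app := fun u => limit.π (upFunctor T s ⋙ M) ⟨u.1, lt_of_le_of_lt (leOfHom f) u.2⟩
          naturality := fun u v g => by
            exact (Category.id_comp _).trans
              (limit.w (upFunctor T s ⋙ M) (homOfLE (leOfHom g))).symm } }
  map_id t := by
    apply limit.hom_ext
    intro u
    simp
  map_comp {s t u} f g := by
    apply limit.hom_ext
    intro v
    simp
    erw [limit.lift_π]

/-- `overline M`, with `(overline M)_t = colim_{s < t} M_s` (the colimit over the empty
category being `0`). -/
noncomputable def overlinePM (M : PersistenceModule F T) : PersistenceModule F T where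
  obj t := colimit (downFunctor T t ⋙ M)
  map {s t} f := colimit.desc (downFunctor T s ⋙ M)
    { pt := colimit (downFunctor T t ⋙ M)
      ι :=
        { app := fun u => colimit.ι (downFunctor T t ⋙ M) ⟨u.1, lt_of_lt_of_le u.2 (leOfHom f)⟩
          naturality := fun u v g => by
            have h : (⟨u.1, lt_of_lt_of_le u.2 (leOfHom f)⟩ : {x : T // x < t}) ⟶
                ⟨v.1, lt_of_lt_of_le v.2 (leOfHom f)⟩ := homOfLE (leOfHom g)
            exact (colimit.w (downFunctor T t ⋙ M) h).trans (Category.comp_id _).symm } }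
  map_id t := by
    apply colimit.hom_ext
    intro u
    simp
  map_comp {s t u} f g := by
    apply colimit.hom_ext
    intro v
    simp
    erw [colimit.ι_desc]

/-- The canonical morphism `M ⟶ underline M` given by the universal property of the limits. -/
noncomputable def toUnderline (M : PersistenceModule F T) : M ⟶ underlinePM F T M where
  app t := limit.lift (upFunctor T t ⋙ M)
    { pt := M.obj t
      π :=
        { app := fun u => M.map (homOfLE u.2.le)
          naturality := fun u v g => by
            dsimp
            rw [Category.id_comp, ← M.map_comp]
            rfl } }
  naturality s t f := by
    apply limit.hom_ext
    intro u
    simp only [underlinePM, Category.assoc, limit.lift_π, ← M.map_comp]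
    erw [limit.lift_π]
    rfl

/-- The canonical morphism `overline M ⟶ M` given by the universal property of the colimits. -/
noncomputable def fromOverline (M : PersistenceModule F T) : overlinePM F T M ⟶ M where
  app t := colimit.desc (downFunctor T t ⋙ M)
    { pt := M.obj t
      ι :=
        { app := fun u => M.map (homOfLE u.2.le)
          naturality := fun u v g => by
            dsimp
            rw [Category.comp_id, ← M.map_comp]
            rfl } }
  naturality s t f := by
    apply colimit.hom_ext
    intro u
    simp only [overlinePM, colimit.ι_desc_assoc, colimit.ι_desc, ← M.map_comp]
    erw [colimit.ι_desc]
    rfl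

/-- `M` is upper semi-continuous if the canonical map `M_t → lim_{s > t} M_s` is an
isomorphism for all `t`. -/
noncomputable def IsUSC (M : PersistenceModule F T) : Prop :=
  ∀ t : T, IsIso ((toUnderline F T M).app t)

/-- `M` is lower semi-continuous if the canonical map `colim_{s < t} M_s → M_t` is an
isomorphism for all `t`. -/
noncomputable def IsLSC (M : PersistenceModule F T) : Prop :=
  ∀ t : T, IsIso ((fromOverline F T M).app t)

/-- `M` is ephemeral if all structure maps `M_{s,t}` with `s < t` vanish. -/
def Ephemeral (M : PersistenceModule F T) : Prop :=
  ∀ s t : T, ∀ h : s < t, M.map (homOfLE h.le) = 0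

/-- `M` is q-tame if all structure maps `M_{s,t}` with `s < t` have finite rank. -/
def QTame (M : PersistenceModule F T) : Prop :=
  ∀ s t : T, ∀ h : s < t, Module.Finite F (LinearMap.range (M.map (homOfLE h.le)).hom)

/-- A morphism of persistence modules is a weak isomorphism if its kernel and cokernel
are ephemeral. -/
noncomputable def IsWeakIso {M N : PersistenceModule F T} (φ : M ⟶ N) : Prop :=
  Ephemeral F T (kernel φ) ∧ Ephemeral F T (cokernel φ)

open Classical

/-- The interval module `C(I)`: the field `F` at points of `I` with identity structure
maps inside `I`, and `0` elsewhere (in particular `C(∅) = 0`). -/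
noncomputable def intervalModule (I : Set T) : PersistenceModule F T where
  obj t := ModuleCat.of F (↥(if t ∈ I then (⊤ : Submodule F F) else (⊥ : Submodule F F)))
  map {s t} f :=
    if h : Set.Icc s t ⊆ I then
      ModuleCat.ofHom (Submodule.inclusion
        (p := if s ∈ I then (⊤ : Submodule F F) else (⊥ : Submodule F F))
        (p' := if t ∈ I then (⊤ : Submodule F F) else (⊥ : Submodule F F)) (by
        rw [if_pos (h (Set.right_mem_Icc.mpr (leOfHom f)))]
        exact le_top))
    else 0
  map_id t := by
    by_cases ht : t ∈ I
    · rw [dif_pos (by simpa using ht)]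
      rfl
    · have h : ¬ Set.Icc t t ⊆ I := by simpa using ht
      rw [dif_neg h]
      have hs : Subsingleton (↥(if t ∈ I then (⊤ : Submodule F F) else (⊥ : Submodule F F))) := by
        rw [if_neg ht]
        infer_instance
      apply ModuleCat.hom_ext
      apply LinearMap.ext
      intro x
      exact @Subsingleton.elim _ hs _ _
  map_comp {s t u} f g := by
    by_cases h : Set.Icc s u ⊆ I
    · have h1 : Set.Icc s t ⊆ I :=
        fun x hx => h ⟨hx.1, le_trans hx.2 (leOfHom g)⟩
      have h2 : Set.Icc t u ⊆ I :=
        fun x hx => h ⟨le_trans (leOfHom f) hx.1, hx.2⟩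
      rw [dif_pos h, dif_pos h1, dif_pos h2]
      rfl
    · rw [dif_neg h]
      by_cases h1 : Set.Icc s t ⊆ I
      · have h2 : ¬ Set.Icc t u ⊆ I := fun h2 => h (by
          intro x hx
          rcases le_total x t with hxt | htx
          · exact h1 ⟨hx.1, hxt⟩
          · exact h2 ⟨htx, hx.2⟩)
        rw [dif_pos h1, dif_neg h2, Limits.comp_zero]
      · rw [dif_neg h1, Limits.zero_comp]

/-- Functoriality of `overline` on morphisms. -/
noncomputable def overlineMap {M N : PersistenceModule F T} (φ : M ⟶ N) :
    overlinePM F T M ⟶ overlinePM F T N where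
  app t := colimMap (Functor.whiskerLeft (downFunctor T t) φ)
  naturality s t f := by
    apply colimit.hom_ext
    intro u
    simp [overlinePM]
    erw [ι_colimMap]
    rfl

/-- Functoriality of `underline` on morphisms. -/
noncomputable def underlineMap {M N : PersistenceModule F T} (φ : M ⟶ N) :
    underlinePM F T M ⟶ underlinePM F T N where
  app t := limMap (Functor.whiskerLeft (upFunctor T t) φ)
  naturality s t f := by
    apply limit.hom_ext
    intro u
    simp [underlinePM]
    erw [limMap_π]
    rfl

/-- The radical of a persistence module: the image of the canonical morphism
`overline M ⟶ M`. -/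
noncomputable def radPM (M : PersistenceModule F T) : PersistenceModule F T :=
  image (fromOverline F T M)

/-- The canonical morphism from the direct sum to the product of a collection of
persistence modules. -/
noncomputable def sumToProd {A : Type} (M : A → PersistenceModule F T) :
    (∐ M) ⟶ (∏ᶜ M) :=
  Sigma.desc fun a => Pi.lift fun b =>
    if h : a = b then eqToHom (congrArg M h) else 0

/-- The pointwise dual persistence module `M*`, indexed by the opposite order. -/
noncomputable def dualPM (M : PersistenceModule F T) : PersistenceModule F Tᵒᵈ where
  obj t := ModuleCat.of F (Module.Dual F (M.obj (OrderDual.ofDual t)))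
  map {s t} f :=
    ModuleCat.ofHom
      (M.map (homOfLE (leOfHom f : OrderDual.ofDual t ≤ OrderDual.ofDual s))).hom.dualMap
  map_id t := by
    change ModuleCat.ofHom (M.map (𝟙 (OrderDual.ofDual t))).hom.dualMap = _
    rw [M.map_id]
    rfl
  map_comp {s t u} f g := by
    change ModuleCat.ofHom (M.map ((homOfLE (leOfHom g : OrderDual.ofDual u ≤ OrderDual.ofDual t)) ≫
        (homOfLE (leOfHom f : OrderDual.ofDual t ≤ OrderDual.ofDual s)))).hom.dualMap = _
    rw [M.map_comp]
    rfl

/-- `I` is an interval in a totally ordered set: if `s ≤ t ≤ u` with `s, u ∈ I`, then `t ∈ I`. -/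
def IsInterval {T : Type*} [LinearOrder T] (I : Set T) : Prop :=
  ∀ ⦃s t u : T⦄, s ≤ t → t ≤ u → s ∈ I → u ∈ I → t ∈ I

/-- `underline I`: the set of `t` such that `I ∩ {s | t < s}` is nonempty and coinitial
in `{s | t < s}`. -/
def underlineSet {T : Type*} [LinearOrder T] (I : Set T) : Set T :=
  {t | (I ∩ Set.Ioi t).Nonempty ∧ ∀ s ∈ Set.Ioi t, ∃ u ∈ I ∩ Set.Ioi t, u ≤ s}

/-- `overline I`: the set of `t` such that `I ∩ {s | s < t}` is nonempty and cofinal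
in `{s | s < t}`. -/
def overlineSet {T : Type*} [LinearOrder T] (I : Set T) : Set T :=
  {t | (I ∩ Set.Iio t).Nonempty ∧ ∀ s ∈ Set.Iio t, ∃ u ∈ I ∩ Set.Iio t, s ≤ u}

/-- `rad I = I ∩ overline I`. -/
def radSet {T : Type*} [LinearOrder T] (I : Set T) : Set T :=
  I ∩ overlineSet I

section AuxHelpers

variable {A B : ModuleCat.{0} F}

lemma aux_isIso_of_sub (f : A ⟶ B) (hA : Subsingleton A) (hB : Subsingleton B) : IsIso f := by
  refine ⟨0, ?_, ?_⟩ <;> apply ModuleCat.hom_ext <;> apply LinearMap.ext <;> intro x <;> exact Subsingleton.elim _ _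

lemma aux_hom_zero_of_sub_tgt (f : A ⟶ B) (hB : Subsingleton B) : f = 0 := by
  apply ModuleCat.hom_ext; apply LinearMap.ext; intro x; exact Subsingleton.elim _ _

lemma aux_hom_zero_of_sub_src (f : A ⟶ B) (hA : Subsingleton A) : f = 0 := by
  apply ModuleCat.hom_ext; apply LinearMap.ext; intro x; rw [Subsingleton.elim x 0]; simp

lemma aux_sub_tgt_of_isIso (f : A ⟶ B) (hf : IsIso f) (hA : Subsingleton A) : Subsingleton B := by
  constructor; intro a b
  have ha := congrArg (fun (g : B ⟶ B) => g a) (IsIso.inv_hom_id f)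
  have hb := congrArg (fun (g : B ⟶ B) => g b) (IsIso.inv_hom_id f)
  simp only [CategoryTheory.comp_apply, CategoryTheory.id_apply] at ha hb
  rw [← ha, ← hb, Subsingleton.elim (inv f a) (inv f b)]

lemma aux_sub_src_of_isIso (f : A ⟶ B) (hf : IsIso f) (hB : Subsingleton B) : Subsingleton A := by
  constructor; intro a b
  have ha := congrArg (fun (g : A ⟶ A) => g a) (IsIso.hom_inv_id f)
  have hb := congrArg (fun (g : A ⟶ A) => g b) (IsIso.hom_inv_id f)
  simp only [CategoryTheory.comp_apply, CategoryTheory.id_apply] at ha hb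
  rw [← ha, ← hb, Subsingleton.elim (f a) (f b)]

lemma aux_sub_of_id_zero (X : ModuleCat.{0} F) (h : 𝟙 X = (0 : X ⟶ X)) : Subsingleton X := by
  constructor; intro a b
  have ha := congrArg (fun (g : X ⟶ X) => g a) h
  have hb := congrArg (fun (g : X ⟶ X) => g b) h
  simp only [ModuleCat.id_apply] at ha hb
  rw [ha, hb]; rfl

end AuxHelpers

section IMHelpers

variable {I : Set T}

lemma im_obj_sub {t : T} (ht : t ∉ I) : Subsingleton ((intervalModule F T I).obj t) := by
  dsimp [intervalModule]
  rw [if_neg ht]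
  infer_instance

lemma im_obj_not_sub {t : T} (ht : t ∈ I) :
    ¬ Subsingleton ((intervalModule F T I).obj t) := by
  intro h
  have h1 : (1 : F) ∈ (if t ∈ I then (⊤ : Submodule F F) else ⊥) := by
    rw [if_pos ht]; trivial
  have h' : Subsingleton ↥(if t ∈ I then (⊤ : Submodule F F) else ⊥) := h
  have := congrArg Subtype.val (@Subsingleton.elim _ h' ⟨(1 : F), h1⟩ 0)
  exact one_ne_zero this

lemma im_map_val {a b : T} (f : a ⟶ b) (h : Set.Icc a b ⊆ I)
    (x : (intervalModule F T I).obj a) :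
    (show ↥(if b ∈ I then (⊤ : Submodule F F) else ⊥) from ((intervalModule F T I).map f) x).1 =
      (show ↥(if a ∈ I then (⊤ : Submodule F F) else ⊥) from x).1 := by
  simp only [intervalModule, dif_pos h]
  rfl

lemma im_map_zero {a b : T} (f : a ⟶ b) (h : ¬ Set.Icc a b ⊆ I) :
    (intervalModule F T I).map f = 0 := by
  dsimp [intervalModule]
  rw [dif_neg h]
  rfl

/-- x ↦ ⟨x.1, _⟩ between fibers of the interval module, available when `b ∈ I`. -/
noncomputable def imElemMap (I : Set T) (a b : T) (hb : b ∈ I) :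
    (intervalModule F T I).obj a ⟶ (intervalModule F T I).obj b :=
  ModuleCat.ofHom (LinearMap.codRestrict (if b ∈ I then (⊤ : Submodule F F) else ⊥)
    (Submodule.subtype (if a ∈ I then (⊤ : Submodule F F) else ⊥)) (fun x => by
    rw [if_pos hb]; trivial))

lemma imElemMap_val (I : Set T) (a b : T) (hb : b ∈ I) (x) :
    (show ↥(if b ∈ I then (⊤ : Submodule F F) else ⊥) from imElemMap F T I a b hb x).1 =
      (show ↥(if a ∈ I then (⊤ : Submodule F F) else ⊥) from x).1 := rfl

lemma interval_Icc (hI : IsInterval I) {a b : T} (ha : a ∈ I) (hb : b ∈ I) :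
    Set.Icc a b ⊆ I := fun _ hx => hI hx.1 hx.2 ha hb

end IMHelpers
section MainHelpers

lemma fromOverline_ι (M : PersistenceModule F T) (t : T) (v : {s : T // s < t}) :
    colimit.ι (downFunctor T t ⋙ M) v ≫ (fromOverline F T M).app t =
      M.map (homOfLE v.2.le) :=
  colimit.ι_desc _ _

lemma toUnderline_π (M : PersistenceModule F T) (t : T) (v : {s : T // t < s}) :
    (toUnderline F T M).app t ≫ limit.π (upFunctor T t ⋙ M) v =
      M.map (homOfLE v.2.le) :=
  limit.lift_π _ _

variable {I : Set T}

lemma colim_sub (t : T) (ht : t ∉ overlineSet I) :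
    Subsingleton ((colimit (downFunctor T t ⋙ intervalModule F T I) : ModuleCat.{0} F)) := by
  apply aux_sub_of_id_zero
  apply colimit.hom_ext
  intro v
  rw [Category.comp_id, comp_zero]
  by_cases hne : (I ∩ Set.Iio t).Nonempty
  · have hcof : ¬ ∀ s ∈ Set.Iio t, ∃ u ∈ I ∩ Set.Iio t, s ≤ u := fun h => ht ⟨hne, h⟩
    push_neg at hcof
    obtain ⟨s, hst, hs⟩ := hcof
    have hw : max v.1 s < t := max_lt v.2 hst
    have hf : v ⟶ (⟨max v.1 s, hw⟩ : {x : T // x < t}) := homOfLE (le_max_left _ _)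
    rw [← colimit.w _ hf]
    have hz : (downFunctor T t ⋙ intervalModule F T I).map hf = 0 := by
      refine im_map_zero F T ((downFunctor T t).map hf) ?_
      intro hsub
      have hmem : max v.1 s ∈ I := hsub (Set.right_mem_Icc.mpr (le_max_left _ _))
      exact absurd (le_max_right v.1 s) (not_le.mpr (hs _ ⟨hmem, hw⟩))
    rw [hz, zero_comp]
  · have hv : v.1 ∉ I := fun h => hne ⟨v.1, h, v.2⟩
    exact aux_hom_zero_of_sub_src F _ (im_obj_sub F T hv)

lemma lim_sub (t : T) (ht : t ∉ underlineSet I) :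
    Subsingleton ((limit (upFunctor T t ⋙ intervalModule F T I) : ModuleCat.{0} F)) := by
  apply aux_sub_of_id_zero
  apply limit.hom_ext
  intro v
  rw [Category.id_comp, zero_comp]
  by_cases hne : (I ∩ Set.Ioi t).Nonempty
  · have hcoi : ¬ ∀ s ∈ Set.Ioi t, ∃ u ∈ I ∩ Set.Ioi t, u ≤ s := fun h => ht ⟨hne, h⟩
    push_neg at hcoi
    obtain ⟨s, hst, hs⟩ := hcoi
    have hw : t < min v.1 s := lt_min v.2 hst
    have hf : (⟨min v.1 s, hw⟩ : {x : T // t < x}) ⟶ v := homOfLE (min_le_left _ _)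
    rw [← limit.w _ hf]
    have hz : (upFunctor T t ⋙ intervalModule F T I).map hf = 0 := by
      refine im_map_zero F T ((upFunctor T t).map hf) ?_
      intro hsub
      have hmem : min v.1 s ∈ I := hsub (Set.left_mem_Icc.mpr (min_le_left _ _))
      exact absurd (min_le_right v.1 s) (not_le.mpr (hs _ ⟨hmem, hw⟩))
    rw [hz, comp_zero]
  · have hv : v.1 ∉ I := fun h => hne ⟨v.1, h, v.2⟩
    exact aux_hom_zero_of_sub_tgt F _ (im_obj_sub F T hv)

/-- The cocone over the restricted diagram with point `F`, used when `t ∉ I` but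
`t ∈ overlineSet I`. -/
noncomputable def auxCocone (I : Set T) (hI : IsInterval I) (t : T)
    (hcof : ∀ s ∈ Set.Iio t, ∃ u ∈ I ∩ Set.Iio t, s ≤ u) :
    Cocone (downFunctor T t ⋙ intervalModule F T I) where
  pt := ModuleCat.of F F
  ι :=
    { app := fun v => ModuleCat.ofHom (Submodule.subtype _)
      naturality := fun v w f => by
        simp only [Functor.const_obj_map, Category.comp_id]
        by_cases h : Set.Icc v.1 w.1 ⊆ I
        · apply ModuleCat.hom_ext
          apply LinearMap.ext
          intro x
          exact im_map_val F T ((downFunctor T t).map f) h x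
        · have hv : v.1 ∉ I := by
            intro hvI
            apply h
            obtain ⟨u, ⟨huI, hut⟩, hwu⟩ := hcof w.1 w.2
            exact fun x hx => hI hx.1 (hx.2.trans hwu) hvI huI
          have hsub := im_obj_sub F T (I := I) hv
          apply ModuleCat.hom_ext
          apply LinearMap.ext
          intro x
          rw [@Subsingleton.elim _ hsub x 0]
          exact (map_zero _).trans (map_zero _).symm }

/-- The cone over the restricted diagram with point `F`, used when `t ∉ I` but
`t ∈ underlineSet I`. -/
noncomputable def auxCone (I : Set T) (hI : IsInterval I) (t : T)
    (hcoi : ∀ s ∈ Set.Ioi t, ∃ u ∈ I ∩ Set.Ioi t, u ≤ s) :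
    Cone (upFunctor T t ⋙ intervalModule F T I) where
  pt := ModuleCat.of F F
  π :=
    { app := fun v =>
        if hv : v.1 ∈ I then
          ModuleCat.ofHom (LinearMap.codRestrict _ LinearMap.id
            (fun x => by rw [if_pos (show (upFunctor T t).obj v ∈ I from hv)]; trivial))
        else 0
      naturality := fun v w f => by
        simp only [Functor.const_obj_map, Category.id_comp]
        by_cases hw : w.1 ∈ I
        · have hv : v.1 ∈ I := by
            obtain ⟨u, ⟨huI, hut⟩, huv⟩ := hcoi v.1 v.2
            exact hI huv (leOfHom ((upFunctor T t).map f)) huI hw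
          have hIcc : Set.Icc v.1 w.1 ⊆ I := interval_Icc T hI hv hw
          erw [dif_pos hv, dif_pos hw]
          apply ModuleCat.hom_ext
          apply LinearMap.ext
          intro x
          apply Subtype.ext
          symm
          exact im_map_val F T ((upFunctor T t).map f) hIcc _
        · have hsub := im_obj_sub F T (I := I) hw
          apply ModuleCat.hom_ext
          apply LinearMap.ext
          intro x
          exact @Subsingleton.elim _ hsub _ _ }

end MainHelpers
/-- `C(I)` is lower semi-continuous iff `I = overline I`, and upper semi-continuous iff
`I = underline I`. -/
theorem intervalModule_semicontinuous_iff (I : Set T) (hI : IsInterval I) :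
    (IsLSC F T (intervalModule F T I) ↔ I = overlineSet I) ∧
    (IsUSC F T (intervalModule F T I) ↔ I = underlineSet I) := by
  constructor
  · -- LSC part
    constructor
    · intro hlsc
      ext t
      constructor
      · intro htI
        by_contra hto
        exact im_obj_not_sub F T htI
          (aux_sub_tgt_of_isIso F _ (hlsc t) (colim_sub F T t hto))
      · intro hto
        by_contra htI
        have hcsub : Subsingleton
            ((colimit (downFunctor T t ⋙ intervalModule F T I) : ModuleCat.{0} F)) :=
          aux_sub_src_of_isIso F _ (hlsc t) (im_obj_sub F T htI)
        obtain ⟨⟨u, huI, hut⟩, hcof⟩ := hto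
        change u < t at hut
        have hdesc := colimit.ι_desc (auxCocone F T I hI t hcof) (⟨u, hut⟩ : {s : T // s < t})
        rw [show colimit.ι (downFunctor T t ⋙ intervalModule F T I)
              (⟨u, hut⟩ : {s : T // s < t}) = 0 from aux_hom_zero_of_sub_tgt F _ hcsub,
          zero_comp] at hdesc
        have h01 := congrArg (fun g => g (⟨1, by rw [if_pos huI]; trivial⟩ :
          ((intervalModule F T I).obj u : Type))) hdesc
        exact one_ne_zero (α := F) (show (1 : F) = 0 from h01.symm)
    · intro hIeq t
      by_cases htI : t ∈ I
      · have hto : t ∈ overlineSet I := hIeq ▸ htI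
        obtain ⟨⟨u, huI, hut⟩, hcof⟩ := hto
        change u < t at hut
        have h1 : (fromOverline F T (intervalModule F T I)).app t ≫
            (imElemMap F T I t u huI ≫
              colimit.ι (downFunctor T t ⋙ intervalModule F T I) ⟨u, hut⟩) =
            𝟙 (colimit (downFunctor T t ⋙ intervalModule F T I)) := by
          apply colimit.hom_ext
          intro v
          erw [Category.comp_id, ← Category.assoc, fromOverline_ι F T _ t v]
          by_cases hv : v.1 ∈ I
          · obtain ⟨w, ⟨hwI, hwt⟩, hmw⟩ := hcof (max u v.1) (max_lt hut v.2)
            have f1 : v ⟶ (⟨w, hwt⟩ : {s : T // s < t}) :=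
              homOfLE ((le_max_right u v.1).trans hmw)
            have f2 : (⟨u, hut⟩ : {s : T // s < t}) ⟶ ⟨w, hwt⟩ :=
              homOfLE ((le_max_left u v.1).trans hmw)
            have key : ((intervalModule F T I).map (homOfLE v.2.le) ≫
                imElemMap F T I t u huI) ≫
                (downFunctor T t ⋙ intervalModule F T I).map f2 =
                (downFunctor T t ⋙ intervalModule F T I).map f1 := by
              apply ModuleCat.hom_ext
              apply LinearMap.ext
              intro x
              apply Subtype.ext
              have e1 := im_map_val F T ((downFunctor T t).map f2)
                (interval_Icc T hI huI hwI)
                (imElemMap F T I t u huI ((intervalModule F T I).map (homOfLE v.2.le) x))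
              have e2 := im_map_val F T (homOfLE v.2.le) (interval_Icc T hI hv htI) x
              have e3 := im_map_val F T ((downFunctor T t).map f1)
                (interval_Icc T hI hv hwI) x
              exact (e1.trans e2).trans e3.symm
            rw [← colimit.w _ f1, ← colimit.w _ f2]
            exact (Category.assoc _ _ _).symm.trans
              (congrArg (· ≫ colimit.ι (downFunctor T t ⋙ intervalModule F T I) ⟨w, hwt⟩) key)
          · apply ModuleCat.hom_ext
            apply LinearMap.ext
            intro x
            have hsub := im_obj_sub F T (I := I) hv
            rw [@Subsingleton.elim _ hsub x 0]
            exact (map_zero _).trans (map_zero _).symm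
        have h2 : (imElemMap F T I t u huI ≫
              colimit.ι (downFunctor T t ⋙ intervalModule F T I) ⟨u, hut⟩) ≫
            (fromOverline F T (intervalModule F T I)).app t =
            𝟙 ((intervalModule F T I).obj t) := by
          erw [Category.assoc, fromOverline_ι F T _ t ⟨u, hut⟩]
          apply ModuleCat.hom_ext
          apply LinearMap.ext
          intro x
          apply Subtype.ext
          exact im_map_val F T (homOfLE hut.le) (interval_Icc T hI huI htI) _
        exact ⟨_, h1, h2⟩
      · have hto : t ∉ overlineSet I := by rw [← hIeq]; exact htI
        exact aux_isIso_of_sub F _ (colim_sub F T t hto) (im_obj_sub F T htI)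
  · -- USC part
    constructor
    · intro husc
      ext t
      constructor
      · intro htI
        by_contra hto
        exact im_obj_not_sub F T htI
          (aux_sub_src_of_isIso F _ (husc t) (lim_sub F T t hto))
      · intro hto
        by_contra htI
        have hlsub : Subsingleton
            ((limit (upFunctor T t ⋙ intervalModule F T I) : ModuleCat.{0} F)) :=
          aux_sub_tgt_of_isIso F _ (husc t) (im_obj_sub F T htI)
        obtain ⟨⟨u, huI, hut⟩, hcoi⟩ := hto
        change t < u at hut
        have hlift := limit.lift_π (auxCone F T I hI t hcoi) (⟨u, hut⟩ : {s : T // t < s})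
        rw [show limit.π (upFunctor T t ⋙ intervalModule F T I)
              (⟨u, hut⟩ : {s : T // t < s}) = 0 from aux_hom_zero_of_sub_src F _ hlsub,
          comp_zero] at hlift
        have h01 := congrArg (fun g => g (1 : F)) hlift
        rw [show (auxCone F T I hI t hcoi).π.app ⟨u, hut⟩ =
            ModuleCat.ofHom (LinearMap.codRestrict _ LinearMap.id (fun x => by
              rw [if_pos (show (upFunctor T t).obj (⟨u, hut⟩ : {s : T // t < s}) ∈ I
                from huI)]; trivial)) from
          dif_pos (show ((⟨u, hut⟩ : {s : T // t < s}) : {s : T // t < s}).1 ∈ I from huI)] at h01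
        exact one_ne_zero (α := F) (show (1 : F) = 0 from congrArg Subtype.val h01.symm)
    · intro hIeq t
      by_cases htI : t ∈ I
      · have hto : t ∈ underlineSet I := hIeq ▸ htI
        obtain ⟨⟨u, huI, hut⟩, hcoi⟩ := hto
        change t < u at hut
        have h1 : (toUnderline F T (intervalModule F T I)).app t ≫
            (limit.π (upFunctor T t ⋙ intervalModule F T I) ⟨u, hut⟩ ≫
              imElemMap F T I u t htI) = 𝟙 ((intervalModule F T I).obj t) := by
          erw [← Category.assoc, toUnderline_π F T _ t ⟨u, hut⟩]
          apply ModuleCat.hom_ext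
          apply LinearMap.ext
          intro x
          apply Subtype.ext
          exact im_map_val F T (homOfLE hut.le) (interval_Icc T hI htI huI) x
        have h2 : (limit.π (upFunctor T t ⋙ intervalModule F T I) ⟨u, hut⟩ ≫
              imElemMap F T I u t htI) ≫ (toUnderline F T (intervalModule F T I)).app t =
            𝟙 (limit (upFunctor T t ⋙ intervalModule F T I)) := by
          apply limit.hom_ext
          intro v
          erw [Category.id_comp, Category.assoc, Category.assoc, toUnderline_π F T _ t v]
          by_cases hv : v.1 ∈ I
          · obtain ⟨w, ⟨hwI, hwt⟩, hwm⟩ := hcoi (min u v.1) (lt_min hut v.2)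
            have f1 : (⟨w, hwt⟩ : {s : T // t < s}) ⟶ ⟨u, hut⟩ :=
              homOfLE (hwm.trans (min_le_left u v.1))
            have f2 : (⟨w, hwt⟩ : {s : T // t < s}) ⟶ v :=
              homOfLE (hwm.trans (min_le_right u v.1))
            have key : (upFunctor T t ⋙ intervalModule F T I).map f1 ≫
                imElemMap F T I u t htI ≫ (intervalModule F T I).map (homOfLE v.2.le) =
                (upFunctor T t ⋙ intervalModule F T I).map f2 := by
              apply ModuleCat.hom_ext
              apply LinearMap.ext
              intro x
              apply Subtype.ext
              have e1 := im_map_val F T (homOfLE v.2.le) (interval_Icc T hI htI hv)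
                (imElemMap F T I u t htI
                  ((intervalModule F T I).map ((upFunctor T t).map f1) x))
              have e2 := im_map_val F T ((upFunctor T t).map f1)
                (interval_Icc T hI hwI huI) x
              have e3 := im_map_val F T ((upFunctor T t).map f2)
                (interval_Icc T hI hwI hv) x
              exact (e1.trans e2).trans e3.symm
            rw [← limit.w _ f1, ← limit.w _ f2]
            simp only [Category.assoc]
            exact congrArg (limit.π (upFunctor T t ⋙ intervalModule F T I) ⟨w, hwt⟩ ≫ ·) key
          · apply ModuleCat.hom_ext
            apply LinearMap.ext
            intro x
            have hsub := im_obj_sub F T (I := I) hv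
            exact @Subsingleton.elim _ hsub _ _
        exact ⟨_, h1, h2⟩
      · have hto : t ∉ underlineSet I := by rw [← hIeq]; exact htI
        exact aux_isIso_of_sub F _ (im_obj_sub F T htI) (lim_sub F T t hto)
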